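/- Let (X, Y₀, Y₁) be an exact factorization triple, G = X × X, H = Y₀ × Y₁, S = {(x,x^{-1}) : x ∈ X}. Then S is a left transversal of every conjugate H^g of H in G; together with 1 ∈ S and sts ∈ S for s,t ∈ S, the triple (G,H,S) is a Bol loop folder. -/
import Mathlib

/-- Key lemma: for any `c d : X`, there is a unique `v ∈ Y₁` with `c * v * d ∈ Y₀`. -/
lemma stmt6_key {X : Type} [Group X] (Y₀ Y₁ : Subgroup X)
    (hint : Y₀ ⊓ Y₁ = ⊥)
    (hfact : ∀ x : X, ∃ y₀ ∈ Y₀, ∃ y₁ ∈ Y₁, x = y₀ * y₁)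
    (c d : X) : ∃! v : X, v ∈ Y₁ ∧ c * v * d ∈ Y₀ := by
  obtain ⟨c₀, hc₀, c₁, hc₁, hc⟩ := hfact c
  obtain ⟨e₀, he₀, e₁, he₁, he⟩ := hfact d⁻¹
  have hd : d = e₁⁻¹ * e₀⁻¹ := by
    rw [← inv_inv d, he]; group
  refine ⟨c₁⁻¹ * e₁, ⟨mul_mem (inv_mem hc₁) he₁, ?_⟩, ?_⟩
  · have heq : c * (c₁⁻¹ * e₁) * d = c₀ * e₀⁻¹ := by rw [hc, hd]; group
    rw [heq]; exact mul_mem hc₀ (inv_mem he₀)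
  · rintro v' ⟨hv', hu'⟩
    set v : X := c₁⁻¹ * e₁ with hvdef
    have hv : v ∈ Y₁ := mul_mem (inv_mem hc₁) he₁
    have hu : c * v * d ∈ Y₀ := by
      have heq : c * v * d = c₀ * e₀⁻¹ := by rw [hvdef, hc, hd]; group
      rw [heq]; exact mul_mem hc₀ (inv_mem he₀)
    -- show v' = v
    have hz1 : e₁ * (v⁻¹ * v') * e₁⁻¹ ∈ Y₁ :=
      mul_mem (mul_mem he₁ (mul_mem (inv_mem hv) hv')) (inv_mem he₁)
    have hz0 : e₁ * (v⁻¹ * v') * e₁⁻¹ ∈ Y₀ := by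
      have heq : e₁ * (v⁻¹ * v') * e₁⁻¹ = e₀⁻¹ * ((c * v * d)⁻¹ * (c * v' * d)) * e₀ := by
        rw [hd]; group
      rw [heq]
      exact mul_mem (mul_mem (inv_mem he₀) (mul_mem (inv_mem hu) hu')) he₀
    have hz : e₁ * (v⁻¹ * v') * e₁⁻¹ = 1 := by
      have : e₁ * (v⁻¹ * v') * e₁⁻¹ ∈ Y₀ ⊓ Y₁ := ⟨hz0, hz1⟩
      rwa [hint, Subgroup.mem_bot] at this
    have : v⁻¹ * v' = 1 := by
      have := congrArg (fun t => e₁⁻¹ * t * e₁) hz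
      simpa [mul_assoc] using this
    calc v' = v * (v⁻¹ * v') := by group
      _ = v := by rw [this, mul_one]

/-- For an exact factorization triple `(X,Y₀,Y₁)`, the triple
`(G,H,S) = (X × X, Y₀ × Y₁, {(x,x⁻¹)})` is a Bol loop folder: `1 ∈ S`, `sts ∈ S` for
`s,t ∈ S`, and `S` is a left transversal of every conjugate of `H` in `G`. -/
theorem stmt6 (X : Type) [Group X] (Y₀ Y₁ : Subgroup X)
    (hint : Y₀ ⊓ Y₁ = ⊥)
    (hfact : ∀ x : X, ∃ y₀ ∈ Y₀, ∃ y₁ ∈ Y₁, x = y₀ * y₁) :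
    ((1 : X × X) ∈ {p : X × X | p.2 = p.1⁻¹}) ∧
    (∀ s ∈ {p : X × X | p.2 = p.1⁻¹}, ∀ t ∈ {p : X × X | p.2 = p.1⁻¹},
        s * t * s ∈ {p : X × X | p.2 = p.1⁻¹}) ∧
    (∀ g a : X × X, ∃! x : X × X, x ∈ {p : X × X | p.2 = p.1⁻¹} ∧
        ∃ h ∈ Y₀.prod Y₁, x = a * (g⁻¹ * h * g)) := by
  refine ⟨by simp, ?_, ?_⟩
  · rintro ⟨s₀, s₁⟩ hs ⟨t₀, t₁⟩ ht
    simp only [Set.mem_setOf_eq] at hs ht ⊢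
    simp only [Prod.mk_mul_mk, hs, ht, mul_inv_rev] at *
    group
  · rintro ⟨g₀, g₁⟩ ⟨a₀, a₁⟩
    obtain ⟨v, ⟨hv1, hv0⟩, hvu⟩ :=
      stmt6_key Y₀ Y₁ hint hfact (g₀ * a₁ * g₁⁻¹) (g₁ * a₀ * g₀⁻¹)
    set u : X := g₀ * a₁ * g₁⁻¹ * v * (g₁ * a₀ * g₀⁻¹) with hudef
    set x₀ : X := a₀ * (g₀⁻¹ * u⁻¹ * g₀) with hx₀def
    have hx₀inv : x₀⁻¹ = a₁ * (g₁⁻¹ * v * g₁) := by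
      rw [hx₀def, hudef]; group
    refine ⟨(x₀, x₀⁻¹), ⟨rfl, ⟨(u⁻¹, v), ?_, ?_⟩⟩, ?_⟩
    · exact Subgroup.mem_prod.mpr ⟨inv_mem hv0, hv1⟩
    · simp only [Prod.mk_mul_mk, Prod.inv_mk]
      exact Prod.ext rfl hx₀inv
    · rintro ⟨x₀', x₁'⟩ ⟨hxS, ⟨h₀', h₁'⟩, hmem, hx⟩
      simp only [Set.mem_setOf_eq] at hxS
      obtain ⟨hh0, hh1⟩ := Subgroup.mem_prod.mp hmem
      simp only [Prod.inv_mk, Prod.mk_mul_mk, Prod.mk.injEq] at hx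
      obtain ⟨hx0, hx1⟩ := hx
      have h2 : a₁ * (g₁⁻¹ * h₁' * g₁) = (a₀ * (g₀⁻¹ * h₀' * g₀))⁻¹ := by
        rw [← hx0, ← hx1, hxS]
      have hcvd : g₀ * a₁ * g₁⁻¹ * h₁' * (g₁ * a₀ * g₀⁻¹) = h₀'⁻¹ := by
        calc g₀ * a₁ * g₁⁻¹ * h₁' * (g₁ * a₀ * g₀⁻¹)
            = g₀ * (a₁ * (g₁⁻¹ * h₁' * g₁)) * (a₀ * g₀⁻¹) := by group
          _ = g₀ * (a₀ * (g₀⁻¹ * h₀' * g₀))⁻¹ * (a₀ * g₀⁻¹) := by rw [h2]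
          _ = h₀'⁻¹ := by group
      have hveq : h₁' = v := hvu h₁' ⟨hh1, by rw [hcvd]; exact inv_mem hh0⟩
      have hx0'inv : x₀'⁻¹ = x₀⁻¹ := by
        rw [hx₀inv, ← hxS, hx1, hveq]
      have hx0' : x₀' = x₀ := by
        rw [← inv_inv x₀', hx0'inv, inv_inv]
      rw [hxS, hx0']
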